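/- (KLMN-type theorem.) Assume there exists λ ∈ ℝ such that the map Φ : D → D, defined by requiring ⟨Φ(f), g⟩_D = b(f, g) − λ·⟨ι f, ι g⟩_H for all g ∈ D (Φ(f) exists and is unique by the Riesz representation theorem), is a bijection of D onto D. Define Dom(X₀) := { ι f : f ∈ D and there exists h ∈ H with b(f, g) = ⟨h, ι g⟩_H for all g ∈ D }, and for such f set X₀(ι f) := h (h is unique since ι has dense range, and f is determined by ι f since ι is injective). Then Dom(X₀) is a dense subspace of H, X₀ is a well-defined self-adjoint operator in H (X₀ equals its Hilbert-space adjoint), and λ belongs to the resolvent set of X₀: the map X₀ − λ·id is a bijection from Dom(X₀) onto H whose inverse is a bounded operator on H. -/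

import Mathlib

/-- KLMN-type theorem. Let `ι : D → H` be a Hilbert triplet embedding (injective, continuous,
dense range) and `b` a bounded Hermitian sesquilinear form on `D`. Assume that for some
`λ ∈ ℝ` the Riesz representative map `Φ : D → D`, defined by
`⟨Φ f, g⟩_D = b(f, g) − λ⟨ι f, ι g⟩_H`, is a bijection of `D`.  Then the operator `X₀` in `H`
with domain `{ι f : ∃ h, b(f, ·) = ⟨h, ι ·⟩}` and `X₀(ι f) = h` is densely defined,
self-adjoint, and `λ` lies in its resolvent set. -/
theorem klmn_selfAdjoint_restriction
    {D H : Type*} [NormedAddCommGroup D] [InnerProductSpace ℂ D] [CompleteSpace D]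
    [NormedAddCommGroup H] [InnerProductSpace ℂ H] [CompleteSpace H]
    (ι : D →L[ℂ] H) (hι_inj : Function.Injective ι) (hι_dense : DenseRange ι)
    (b : D → D → ℂ)
    (hb_add₁ : ∀ f f' g : D, b (f + f') g = b f g + b f' g)
    (hb_smul₁ : ∀ (c : ℂ) (f g : D), b (c • f) g = (starRingEnd ℂ) c * b f g)
    (hb_add₂ : ∀ f g g' : D, b f (g + g') = b f g + b f g')
    (hb_smul₂ : ∀ (c : ℂ) (f g : D), b f (c • g) = c * b f g)
    (hb_herm : ∀ f g : D, b g f = (starRingEnd ℂ) (b f g))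
    (hb_bdd : ∃ M : ℝ, ∀ f g : D, ‖b f g‖ ≤ M * ‖f‖ * ‖g‖)
    (lam : ℝ)
    (Φ : D → D)
    (hΦ : ∀ f g : D, (inner ℂ (Φ f) g : ℂ) = b f g - (lam : ℂ) * (inner ℂ (ι f) (ι g) : ℂ))
    (hΦ_bij : Function.Bijective Φ) :
    ∃ T : H →ₗ.[ℂ] H,
      (T.domain : Set H) =
        {x : H | ∃ f : D, ι f = x ∧ ∃ h : H, ∀ g : D, b f g = (inner ℂ h (ι g) : ℂ)} ∧
      Dense (T.domain : Set H) ∧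
      (∀ (f : D) (h : H), (∀ g : D, b f g = (inner ℂ h (ι g) : ℂ)) →
        ∀ hx : ι f ∈ T.domain, T ⟨ι f, hx⟩ = h) ∧
      IsSelfAdjoint T ∧
      ∃ Rb : H →L[ℂ] H,
        (∀ y : H, ∃ hx : Rb y ∈ T.domain, T ⟨Rb y, hx⟩ - (lam : ℂ) • Rb y = y) ∧
        (∀ x : T.domain, Rb (T x - (lam : ℂ) • (x : H)) = (x : H)) := by
  classical
  obtain ⟨M, hM⟩ := hb_bdd
  -- Φ is linear
  have hΦ_add : ∀ f f' : D, Φ (f + f') = Φ f + Φ f' := by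
    intro f f'
    refine ext_inner_right ℂ fun g => ?_
    rw [inner_add_left, hΦ, hΦ, hΦ, hb_add₁, map_add, inner_add_left]
    ring
  have hΦ_smul : ∀ (c : ℂ) (f : D), Φ (c • f) = c • Φ f := by
    intro c f
    refine ext_inner_right ℂ fun g => ?_
    rw [inner_smul_left, hΦ, hΦ, hb_smul₁, map_smul, inner_smul_left]
    ring
  set C : ℝ := |M| + |lam| * (‖ι‖ * ‖ι‖) with hCdef
  have hΦ_bound : ∀ f : D, ‖Φ f‖ ≤ C * ‖f‖ := by
    intro f
    have hC0 : 0 ≤ C := by positivity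
    rcases eq_or_ne (Φ f) 0 with h0 | h0
    · rw [h0, norm_zero]; positivity
    have hpos : 0 < ‖Φ f‖ := norm_pos_iff.mpr h0
    have key : ‖Φ f‖ * ‖Φ f‖ ≤ (C * ‖f‖) * ‖Φ f‖ := by
      have h1 : ‖Φ f‖ * ‖Φ f‖ = RCLike.re (inner ℂ (Φ f) (Φ f) : ℂ) :=
        (inner_self_eq_norm_mul_norm (Φ f)).symm
      have h2 : RCLike.re (inner ℂ (Φ f) (Φ f) : ℂ) ≤ ‖(inner ℂ (Φ f) (Φ f) : ℂ)‖ :=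
        RCLike.re_le_norm _
      have h3 : ‖(inner ℂ (Φ f) (Φ f) : ℂ)‖
          ≤ ‖b f (Φ f)‖ + |lam| * ‖(inner ℂ (ι f) (ι (Φ f)) : ℂ)‖ := by
        rw [hΦ]
        refine le_trans (norm_sub_le _ _) ?_
        rw [norm_mul, Complex.norm_real, Real.norm_eq_abs]
      have h4 : ‖b f (Φ f)‖ ≤ M * ‖f‖ * ‖Φ f‖ := hM f (Φ f)
      have h5 : ‖(inner ℂ (ι f) (ι (Φ f)) : ℂ)‖ ≤ ‖ι f‖ * ‖ι (Φ f)‖ := norm_inner_le_norm _ _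
      have h6 : ‖ι f‖ ≤ ‖ι‖ * ‖f‖ := ι.le_opNorm f
      have h7 : ‖ι (Φ f)‖ ≤ ‖ι‖ * ‖Φ f‖ := ι.le_opNorm (Φ f)
      have hM' : M * ‖f‖ * ‖Φ f‖ ≤ |M| * ‖f‖ * ‖Φ f‖ := by
        have : M ≤ |M| := le_abs_self M
        have hnn : (0:ℝ) ≤ ‖f‖ * ‖Φ f‖ := by positivity
        nlinarith
      have h8 : ‖ι f‖ * ‖ι (Φ f)‖ ≤ (‖ι‖ * ‖f‖) * (‖ι‖ * ‖Φ f‖) := by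
        have := norm_nonneg (ι f); have := norm_nonneg (ι (Φ f))
        have h9 : (0:ℝ) ≤ ‖ι‖ * ‖f‖ := by positivity
        exact mul_le_mul h6 h7 (norm_nonneg _) h9
      have hl : (0:ℝ) ≤ |lam| := abs_nonneg _
      rw [hCdef]
      nlinarith [mul_le_mul_of_nonneg_left h8 hl]
    exact le_of_mul_le_mul_right key hpos
  let Φlin : D →ₗ[ℂ] D :=
    { toFun := Φ, map_add' := hΦ_add, map_smul' := hΦ_smul }
  let ΦL : D →L[ℂ] D := Φlin.mkContinuous C hΦ_bound
  have hΦL : ∀ f : D, ΦL f = Φ f := fun f => rfl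
  have hker : LinearMap.ker (ΦL : D →ₗ[ℂ] D) = ⊥ := (LinearMap.ker_eq_bot (f := (ΦL : D →ₗ[ℂ] D))).mpr hΦ_bij.injective
  have hrange : LinearMap.range (ΦL : D →ₗ[ℂ] D) = ⊤ := (LinearMap.range_eq_top (f := (ΦL : D →ₗ[ℂ] D))).mpr hΦ_bij.surjective
  let Φe : D ≃L[ℂ] D := ContinuousLinearEquiv.ofBijective ΦL hker hrange
  have hΦe : ∀ f : D, Φe f = Φ f := fun f => rfl
  let ιad : H →L[ℂ] D := ContinuousLinearMap.adjoint ι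
  have hιad : ∀ (y : H) (g : D), (inner ℂ (ιad y) g : ℂ) = (inner ℂ y (ι g) : ℂ) := fun y g =>
    ContinuousLinearMap.adjoint_inner_left ι g y
  -- zero test against a dense range
  have hzero : ∀ y : H, (∀ g : D, (inner ℂ y (ι g) : ℂ) = 0) → y = 0 := by
    intro y hy
    have heq : (fun x : H => (inner ℂ y x : ℂ)) = fun _ => (0 : ℂ) := by
      refine Continuous.ext_on hι_dense (continuous_const.inner continuous_id) continuous_const ?_
      rintro x ⟨g, rfl⟩
      exact hy g
    have : (inner ℂ y y : ℂ) = 0 := congrFun heq y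
    exact inner_self_eq_zero.mp this
  let Rb : H →L[ℂ] H := ι.comp ((Φe.symm : D →L[ℂ] D).comp ιad)
  have hRb : ∀ y : H, Rb y = ι (Φe.symm (ιad y)) := fun y => rfl
  have hΦRb : ∀ y : H, Φ (Φe.symm (ιad y)) = ιad y := fun y => Φe.apply_symm_apply (ιad y)
  have conj_lam : (starRingEnd ℂ) (lam : ℂ) = (lam : ℂ) := Complex.conj_ofReal lam
  -- the key representation identity for elements of the range of Rb
  have hbR : ∀ y : H, ∀ g : D,
      b (Φe.symm (ιad y)) g = (inner ℂ (y + (lam : ℂ) • Rb y) (ι g) : ℂ) := by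
    intro y g
    have h1 : b (Φe.symm (ιad y)) g
        = (inner ℂ (Φ (Φe.symm (ιad y))) g : ℂ)
          + (lam : ℂ) * (inner ℂ (ι (Φe.symm (ιad y))) (ι g) : ℂ) := by
      rw [hΦ]; ring
    rw [h1, hΦRb, hιad, inner_add_left, inner_smul_left, conj_lam, hRb]
  have hRb_inj : Function.Injective Rb := by
    intro y y' h
    have h1 : ι (Φe.symm (ιad y)) = ι (Φe.symm (ιad y')) := h
    have h2 : Φe.symm (ιad y) = Φe.symm (ιad y') := hι_inj h1
    have h3 : ιad y = ιad y' := Φe.symm.injective h2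
    have h4 : ∀ g : D, (inner ℂ (y - y') (ι g) : ℂ) = 0 := by
      intro g
      rw [inner_sub_left, ← hιad, ← hιad, h3, sub_self]
    have := hzero _ h4
    exact sub_eq_zero.mp this
  have hRb_inj' : Function.Injective (Rb : H →ₗ[ℂ] H) := hRb_inj
  set S : Submodule ℂ H := LinearMap.range (Rb : H →ₗ[ℂ] H) with hSdef
  have hmemR : ∀ y : H, Rb y ∈ S := fun y => ⟨y, rfl⟩
  let e : H ≃ₗ[ℂ] S := LinearEquiv.ofInjective (Rb : H →ₗ[ℂ] H) hRb_inj'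
  have he : ∀ y : H, ((e y : S) : H) = Rb y := fun y => LinearEquiv.ofInjective_apply _ y
  let T : H →ₗ.[ℂ] H := ⟨S, (e.symm : S →ₗ[ℂ] H) + (lam : ℂ) • S.subtype⟩
  have hT_dom : T.domain = S := rfl
  have hT_app : ∀ x : T.domain, T x = e.symm x + (lam : ℂ) • (x : H) := fun x => rfl
  have hTR : ∀ (y : H) (hx : Rb y ∈ T.domain), T ⟨Rb y, hx⟩ = y + (lam : ℂ) • Rb y := by
    intro y hx
    have hsub : (⟨Rb y, hx⟩ : T.domain) = e y := Subtype.ext (he y).symm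
    rw [hT_app, hsub, LinearEquiv.symm_apply_apply, he]
  -- membership characterization for representable elements
  have hmem_of_rep : ∀ (f : D) (h : H), (∀ g : D, b f g = (inner ℂ h (ι g) : ℂ)) →
      ι f = Rb (h - (lam : ℂ) • ι f) := by
    intro f h hb
    have hfeq : Φe.symm (ιad (h - (lam : ℂ) • ι f)) = f := by
      apply Φe.injective
      rw [Φe.apply_symm_apply]
      refine ext_inner_right ℂ fun g => ?_
      rw [hιad, hΦe, hΦ, inner_sub_left, inner_smul_left, conj_lam, ← hb]
    rw [hRb, hfeq]
  have hTdense : Dense (T.domain : Set H) := by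
    have hdenseAd : Dense (Set.range ιad) := by
      have horth : (LinearMap.range (ιad : H →ₗ[ℂ] D))ᗮ = ⊥ := by
        rw [Submodule.eq_bot_iff]
        intro x hx
        have h1 : ∀ y : H, (inner ℂ y (ι x) : ℂ) = 0 := by
          intro y
          have := hx (ιad y) ⟨y, rfl⟩
          rwa [hιad] at this
        have h2 : ι x = 0 := by
          have := h1 (ι x)
          exact inner_self_eq_zero.mp this
        have : ι x = ι 0 := by rw [h2, map_zero]
        exact hι_inj this
      have := Submodule.topologicalClosure_eq_top_iff.mpr horth
      have hd : Dense ((LinearMap.range (ιad : H →ₗ[ℂ] D)) : Set D) :=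
        Submodule.dense_iff_topologicalClosure_eq_top.mpr this
      convert hd using 1
      exact (LinearMap.coe_range (ιad : H →ₗ[ℂ] D)).symm
    have hcomp : DenseRange (fun f : D => ι (Φe.symm f)) := by
      have : Set.range (fun f : D => ι (Φe.symm f)) = Set.range ι := by
        ext x
        constructor
        · rintro ⟨f, rfl⟩; exact ⟨Φe.symm f, rfl⟩
        · rintro ⟨f, rfl⟩; exact ⟨Φe f, by simp⟩
      rw [DenseRange, this]
      exact hι_dense
    have hcont : Continuous (fun f : D => ι (Φe.symm f)) :=
      ι.continuous.comp Φe.symm.continuous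
    have himg : Dense ((fun f : D => ι (Φe.symm f)) '' Set.range ιad) :=
      hcomp.dense_image hcont hdenseAd
    have : ((T.domain : Submodule ℂ H) : Set H)
        = (fun f : D => ι (Φe.symm f)) '' Set.range ιad := by
      ext x
      constructor
      · rintro ⟨y, rfl⟩
        exact ⟨ιad y, ⟨y, rfl⟩, rfl⟩
      · rintro ⟨f, ⟨y, rfl⟩, rfl⟩
        exact ⟨y, rfl⟩
    rw [this]
    exact himg
  refine ⟨T, ?_, ?_, ?_, ?_, ?_⟩
  · -- domain description
    ext x
    constructor
    · rintro ⟨y, rfl⟩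
      exact ⟨Φe.symm (ιad y), (hRb y).symm, y + (lam : ℂ) • Rb y, hbR y⟩
    · rintro ⟨f, rfl, h, hb⟩
      exact ⟨h - (lam : ℂ) • ι f, (hmem_of_rep f h hb).symm⟩
  · -- density
    exact hTdense
  · -- the operator acts correctly
    intro f h hb hx
    have key := hmem_of_rep f h hb
    have hx' : Rb (h - (lam : ℂ) • ι f) ∈ T.domain := hmemR _
    have hsub : (⟨ι f, hx⟩ : T.domain) = ⟨Rb (h - (lam : ℂ) • ι f), hx'⟩ :=
      Subtype.ext key
    rw [hsub, hTR, ← key]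
    abel
  · -- self-adjointness
    -- every element of the domain is representable
    have hrep : ∀ x : T.domain, ∃ f : D, ι f = (x : H) ∧
        ∀ g : D, b f g = (inner ℂ (T x) (ι g) : ℂ) := by
      rintro ⟨x, hx⟩
      obtain ⟨y, hy⟩ := hx
      have hy' : Rb y = x := hy
      have hx2 : Rb y ∈ T.domain := hmemR y
      have hsub : (⟨x, ⟨y, hy⟩⟩ : T.domain) = ⟨Rb y, hx2⟩ := Subtype.ext hy'.symm
      refine ⟨Φe.symm (ιad y), by rw [← hRb, hy'], fun g => ?_⟩
      rw [hsub, hTR]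
      exact hbR y g
    have hsymm : ∀ x y : T.domain, (inner ℂ (T x) (y : H) : ℂ) = (inner ℂ (x : H) (T y) : ℂ) := by
      intro x y
      obtain ⟨f, hf, hbf⟩ := hrep x
      obtain ⟨f', hf', hbf'⟩ := hrep y
      rw [← hf, ← hf']
      calc (inner ℂ (T x) (ι f') : ℂ) = b f f' := (hbf f').symm
        _ = (starRingEnd ℂ) (b f' f) := by rw [hb_herm]
        _ = (starRingEnd ℂ) (inner ℂ (T y) (ι f) : ℂ) := by rw [hbf']
        _ = (inner ℂ (ι f) (T y) : ℂ) := inner_conj_symm _ _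
    have hformal : T.IsFormalAdjoint T := fun x y => hsymm x y
    rw [LinearPMap.isSelfAdjoint_def]
    refine le_antisymm ?_ (hformal.le_adjoint hTdense)
    -- T† ≤ T
    have hsurj : ∀ z : H, ∃ u : T.domain, T u - (lam : ℂ) • (u : H) = z := by
      intro z
      refine ⟨⟨Rb z, hmemR z⟩, ?_⟩
      rw [hTR]
      abel
    have hadj := LinearPMap.adjoint_isFormalAdjoint (T := T) hTdense
    have claim : ∀ x : T.adjoint.domain,
        (x : H) = Rb (T.adjoint x - (lam : ℂ) • (x : H)) := by
      intro x
      set w : H := T.adjoint x with hw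
      set y' : H := Rb (w - (lam : ℂ) • (x : H)) with hy'def
      have hy'mem : y' ∈ T.domain := hmemR _
      set z' : T.domain := ⟨y', hy'mem⟩ with hz'
      have e3 : T z' = (w - (lam : ℂ) • (x : H)) + (lam : ℂ) • y' := hTR _ _
      have key : ∀ u : T.domain,
          (inner ℂ ((x : H) - y') (T u - (lam : ℂ) • (u : H)) : ℂ) = 0 := by
        intro u
        have e1 : (inner ℂ ((x : H)) (T u) : ℂ) = inner ℂ w (u : H) := (hadj x u).symm
        have e2 : (inner ℂ y' (T u) : ℂ) = inner ℂ (T z') (u : H) := (hsymm z' u).symm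
        rw [inner_sub_left, inner_sub_right, inner_sub_right, inner_smul_right,
          inner_smul_right, e1, e2, e3, inner_add_left, inner_sub_left,
          inner_smul_left, inner_smul_left, conj_lam]
        ring
      have hzero' : ∀ z : H, (inner ℂ ((x : H) - y') z : ℂ) = 0 := by
        intro z
        obtain ⟨u, hu⟩ := hsurj z
        rw [← hu]
        exact key u
      have : (x : H) - y' = 0 := inner_self_eq_zero.mp (hzero' ((x : H) - y'))
      have := sub_eq_zero.mp this
      rw [this]
    constructor
    · -- domain inclusion
      intro xx hx
      have h2 : xx = Rb (T.adjoint ⟨xx, hx⟩ - (lam : ℂ) • xx) := claim ⟨xx, hx⟩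
      rw [h2]
      exact hmemR _
    · -- agreement of values
      intro a bb hab
      have hxy' : (a : H) = Rb (T.adjoint a - (lam : ℂ) • (a : H)) := claim a
      have hmem : Rb (T.adjoint a - (lam : ℂ) • (a : H)) ∈ T.domain := hmemR _
      have hb' : bb = ⟨Rb (T.adjoint a - (lam : ℂ) • (a : H)), hmem⟩ :=
        Subtype.ext (by rw [← hab]; exact hxy')
      rw [hb', hTR, ← hxy']
      abel
  · -- resolvent
    refine ⟨Rb, fun y => ⟨hmemR y, by rw [hTR]; abel⟩, ?_⟩
    rintro ⟨x, hx⟩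
    obtain ⟨y, hy⟩ := hx
    have hy' : Rb y = x := hy
    have hx2 : Rb y ∈ T.domain := hmemR y
    have hsub : (⟨x, ⟨y, hy⟩⟩ : T.domain) = ⟨Rb y, hx2⟩ := Subtype.ext hy'.symm
    rw [hsub, hTR, add_sub_cancel_right]
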